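/- arXiv:2411.00525 — 3 statements merged into one kernel-verified Lean document; each statement's English description precedes it below -/
import Mathlib

section
/- Let m, n be positive natural numbers, let Σ be a real symmetric positive definite m×m matrix, let Φ be a real symmetric positive definite n×n matrix, let M be a real m×n matrix, and let g : ℝ → ℝ be measurable and nonnegative. Then ∫_{ℝ^{m×n}} (det Σ)^{-n/2} (det Φ)^{-m/2} g(tr((X−M)ᵀ Σ⁻¹ (X−M) Φ⁻¹)) dX = ∫_{ℝ^{m×n}} g(tr(Yᵀ Y)) dY, where integration is with respect to Lebesgue measure on m×n real matrices. Consequently, the normalizing constant of the matrix variate elliptically contoured density does not depend on M, Σ, or Φ. -/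
open MeasureTheory Matrix Set Kronecker ENNReal

section aux
variable {m n : ℕ}

lemma stdBasis_repr_matrix (X : Matrix (Fin m) (Fin n) ℝ) (i : Fin m) (j : Fin n) :
    (Matrix.stdBasis ℝ (Fin m) (Fin n)).repr X (i, j) = X i j := by
  simp [Matrix.stdBasis, Pi.basis_repr]

noncomputable def mulLeftRightLin (A : Matrix (Fin m) (Fin m) ℝ)
    (B : Matrix (Fin n) (Fin n) ℝ) :
    Matrix (Fin m) (Fin n) ℝ →ₗ[ℝ] Matrix (Fin m) (Fin n) ℝ where
  toFun X := A * X * B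
  map_add' X Y := by
    show A * (X + Y) * B = A * X * B + A * Y * B
    rw [Matrix.mul_add, Matrix.add_mul]
  map_smul' r X := by
    show A * (r • X) * B = r • (A * X * B)
    simp [Matrix.mul_smul, Matrix.smul_mul]

lemma det_mulLeftRightLin (A : Matrix (Fin m) (Fin m) ℝ)
    (B : Matrix (Fin n) (Fin n) ℝ) :
    LinearMap.det (mulLeftRightLin A B) = A.det ^ n * B.det ^ m := by
  classical
  have h : LinearMap.toMatrix (Matrix.stdBasis ℝ (Fin m) (Fin n))
      (Matrix.stdBasis ℝ (Fin m) (Fin n)) (mulLeftRightLin A B) = A ⊗ₖ Bᵀ := by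
    ext ⟨i, j⟩ ⟨k, l⟩
    rw [LinearMap.toMatrix_apply, Matrix.stdBasis_eq_single, stdBasis_repr_matrix]
    show (A * single k l (1:ℝ) * B) i j = A i k * Bᵀ j l
    simp [Matrix.mul_apply, Matrix.single, Finset.mul_sum, ite_and, mul_comm]
  rw [← LinearMap.det_toMatrix (Matrix.stdBasis ℝ (Fin m) (Fin n)), h, Matrix.det_kronecker]
  simp

end aux

/-- The normalizing constant of the matrix variate elliptically contoured density
does not depend on `M`, `Σ`, `Φ`: the Lebesgue integral over `m × n` real matrices of
`(det Σ)^{-n/2} (det Φ)^{-m/2} g(tr((X−M)ᵀ Σ⁻¹ (X−M) Φ⁻¹))` equals the integral of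
`g(tr(Yᵀ Y))`. -/
theorem stmt_1 (m n : ℕ) (hm : 0 < m) (hn : 0 < n)
    (S : Matrix (Fin m) (Fin m) ℝ) (hSsym : S.IsSymm) (hS : S.PosDef)
    (P : Matrix (Fin n) (Fin n) ℝ) (hPsym : P.IsSymm) (hP : P.PosDef)
    (M : Matrix (Fin m) (Fin n) ℝ)
    (g : ℝ → ℝ) (hg : Measurable g) (hg0 : ∀ v, 0 ≤ g v) :
    (∫⁻ X : Fin m → Fin n → ℝ,
        ENNReal.ofReal (S.det ^ (-(n : ℝ) / 2) * P.det ^ (-(m : ℝ) / 2)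
          * g (Matrix.trace ((Matrix.of X - M)ᵀ * S⁻¹ * (Matrix.of X - M) * P⁻¹))))
      = ∫⁻ Y : Fin m → Fin n → ℝ,
          ENNReal.ofReal (g (Matrix.trace ((Matrix.of Y)ᵀ * Matrix.of Y))) := by
  classical
  set A := (open scoped MatrixOrder in CFC.sqrt S) with hAdef
  set B := (open scoped MatrixOrder in CFC.sqrt P) with hBdef
  have hA2 : A * A = S := by open scoped MatrixOrder in exact CFC.sqrt_mul_sqrt_self _ hS.posSemidef.nonneg
  have hB2 : B * B = P := by open scoped MatrixOrder in exact CFC.sqrt_mul_sqrt_self _ hP.posSemidef.nonneg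
  have hAsym : Aᵀ = A := by
    rw [← Matrix.conjTranspose_eq_transpose_of_trivial]
    open scoped MatrixOrder in exact (CFC.sqrt_nonneg S).isSelfAdjoint
  have hBsym : Bᵀ = B := by
    rw [← Matrix.conjTranspose_eq_transpose_of_trivial]
    open scoped MatrixOrder in exact (CFC.sqrt_nonneg P).isSelfAdjoint
  have hdetS : 0 < S.det := hS.det_pos
  have hdetP : 0 < P.det
  · exact hP.det_pos
  have hadet : A.det * A.det = S.det := by rw [← Matrix.det_mul, hA2]
  have hbdet : B.det * B.det = P.det := by rw [← Matrix.det_mul, hB2]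
  have ha0 : A.det ≠ 0 := by
    intro h; rw [h, mul_zero] at hadet; exact hdetS.ne' hadet.symm
  have hb0 : B.det ≠ 0 := by
    intro h; rw [h, mul_zero] at hbdet; exact hdetP.ne' hbdet.symm
  -- cancellation identities
  have hSinv : A * S⁻¹ * A = 1 := by
    rw [← hA2, Matrix.mul_inv_rev]
    have h1 : A * A⁻¹ = 1 := Matrix.mul_nonsing_inv A (isUnit_iff_ne_zero.2 ha0)
    have h2 : A⁻¹ * A = 1 := Matrix.nonsing_inv_mul A (isUnit_iff_ne_zero.2 ha0)
    calc A * (A⁻¹ * A⁻¹) * A = (A * A⁻¹) * (A⁻¹ * A) := by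
          simp only [Matrix.mul_assoc]
      _ = 1 := by rw [h1, h2, one_mul]
  have hPinv : B * (P⁻¹ * B) = 1 := by
    rw [← Matrix.mul_assoc, ← hB2, Matrix.mul_inv_rev]
    have h1 : B * B⁻¹ = 1 := Matrix.mul_nonsing_inv B (isUnit_iff_ne_zero.2 hb0)
    have h2 : B⁻¹ * B = 1 := Matrix.nonsing_inv_mul B (isUnit_iff_ne_zero.2 hb0)
    calc B * (B⁻¹ * B⁻¹) * B = (B * B⁻¹) * (B⁻¹ * B) := by
          simp only [Matrix.mul_assoc]
      _ = 1 := by rw [h1, h2, one_mul]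
  have hcancelS : ∀ Z : Matrix (Fin m) (Fin n) ℝ, A * (S⁻¹ * (A * Z)) = Z := by
    intro Z
    rw [← Matrix.mul_assoc, ← Matrix.mul_assoc, hSinv, Matrix.one_mul]
  -- the trace identity
  have htrace : ∀ Y : Matrix (Fin m) (Fin n) ℝ,
      Matrix.trace ((A * Y * B)ᵀ * S⁻¹ * (A * Y * B) * P⁻¹) = Matrix.trace (Yᵀ * Y) := by
    intro Y
    rw [Matrix.transpose_mul, Matrix.transpose_mul, hAsym, hBsym]
    simp only [Matrix.mul_assoc]
    rw [Matrix.trace_mul_comm]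
    simp only [Matrix.mul_assoc]
    rw [hPinv, Matrix.mul_one, hcancelS]
  -- the linear change of variables
  set L : (Fin m → Fin n → ℝ) →ₗ[ℝ] (Fin m → Fin n → ℝ) :=
    ((Matrix.ofLinearEquiv ℝ).symm.toLinearMap.comp
      ((mulLeftRightLin A B).comp (Matrix.ofLinearEquiv ℝ).toLinearMap)) with hLdef
  have hLdet : LinearMap.det L = A.det ^ n * B.det ^ m := by
    rw [← det_mulLeftRightLin A B]
    have := LinearMap.det_conj (mulLeftRightLin A B) (Matrix.ofLinearEquiv ℝ
      (m := Fin m) (n := Fin n)).symm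
    rw [← this]
    congr 1
  have hd0 : LinearMap.det L ≠ 0 := by
    rw [hLdet]; exact mul_ne_zero (pow_ne_zero _ ha0) (pow_ne_zero _ hb0)
  -- measurable equiv from L
  set e : (Fin m → Fin n → ℝ) ≃ᵐ (Fin m → Fin n → ℝ) :=
    (LinearMap.equivOfDetNeZero L hd0).toContinuousLinearEquiv.toHomeomorph.toMeasurableEquiv
    with hedef
  have he : ∀ x, e x = L x := fun x => rfl
  have hmap : Measure.map e volume
      = ENNReal.ofReal |(LinearMap.det L)⁻¹| • volume := by
    rw [show ⇑e = ⇑L from rfl]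
    exact Measure.map_linearMap_addHaar_eq_smul_addHaar volume hd0
  have key : ∀ F : (Fin m → Fin n → ℝ) → ℝ≥0∞,
      (∫⁻ X, F X) = ENNReal.ofReal |LinearMap.det L| * ∫⁻ Y, F (L Y) := by
    intro F
    have h1 : (∫⁻ Y, F (e Y)) = ENNReal.ofReal |(LinearMap.det L)⁻¹| * ∫⁻ X, F X := by
      rw [← lintegral_map_equiv F e, hmap, lintegral_smul_measure, smul_eq_mul]
    have h2 : ENNReal.ofReal |LinearMap.det L| * ENNReal.ofReal |(LinearMap.det L)⁻¹| = 1 := by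
      rw [← ENNReal.ofReal_mul (abs_nonneg _), ← abs_mul, mul_inv_cancel₀ hd0]
      simp
    calc (∫⁻ X, F X)
        = (ENNReal.ofReal |LinearMap.det L| * ENNReal.ofReal |(LinearMap.det L)⁻¹|)
            * ∫⁻ X, F X := by rw [h2, one_mul]
      _ = ENNReal.ofReal |LinearMap.det L| * ∫⁻ Y, F (e Y) := by
            rw [h1, mul_assoc]
      _ = ENNReal.ofReal |LinearMap.det L| * ∫⁻ Y, F (L Y) := by
            simp only [he]
  -- the constant
  have habs : |A.det| = S.det ^ ((1:ℝ)/2) := by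
    rw [← Real.sqrt_eq_rpow, ← hadet, Real.sqrt_mul_self_eq_abs]
  have hbabs : |B.det| = P.det ^ ((1:ℝ)/2) := by
    rw [← Real.sqrt_eq_rpow, ← hbdet, Real.sqrt_mul_self_eq_abs]
  set c := S.det ^ (-(n : ℝ) / 2) * P.det ^ (-(m : ℝ) / 2) with hcdef
  have hc : 0 ≤ c :=
    mul_nonneg (Real.rpow_nonneg hdetS.le _) (Real.rpow_nonneg hdetP.le _)
  have hconst : c * |LinearMap.det L| = 1 := by
    rw [hcdef, hLdet, abs_mul, abs_pow, abs_pow, habs, hbabs,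
      ← Real.rpow_natCast (S.det ^ ((1:ℝ)/2)) n, ← Real.rpow_natCast (P.det ^ ((1:ℝ)/2)) m,
      ← Real.rpow_mul hdetS.le, ← Real.rpow_mul hdetP.le,
      mul_mul_mul_comm, ← Real.rpow_add hdetS, ← Real.rpow_add hdetP,
      show -(n:ℝ)/2 + 1/2*(n:ℝ) = 0 by ring, show -(m:ℝ)/2 + 1/2*(m:ℝ) = 0 by ring,
      Real.rpow_zero, Real.rpow_zero, one_mul]
  -- main computation
  set F : (Fin m → Fin n → ℝ) → ℝ≥0∞ := fun X =>
    ENNReal.ofReal (g (Matrix.trace ((Matrix.of X)ᵀ * S⁻¹ * Matrix.of X * P⁻¹))) with hFdef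
  calc (∫⁻ X : Fin m → Fin n → ℝ,
        ENNReal.ofReal (c * g (Matrix.trace ((Matrix.of X - M)ᵀ * S⁻¹ * (Matrix.of X - M) * P⁻¹))))
      = ∫⁻ X : Fin m → Fin n → ℝ, ENNReal.ofReal c
          * ENNReal.ofReal (g (Matrix.trace ((Matrix.of X - M)ᵀ * S⁻¹ * (Matrix.of X - M) * P⁻¹))) := by
        simp_rw [ENNReal.ofReal_mul hc]
    _ = ENNReal.ofReal c * ∫⁻ X : Fin m → Fin n → ℝ,
          ENNReal.ofReal (g (Matrix.trace ((Matrix.of X - M)ᵀ * S⁻¹ * (Matrix.of X - M) * P⁻¹))) :=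
        lintegral_const_mul' _ _ ENNReal.ofReal_ne_top
    _ = ENNReal.ofReal c * ∫⁻ X, F X := by
        congr 1
        exact lintegral_sub_right_eq_self F (Matrix.of.symm M)
    _ = ENNReal.ofReal c * (ENNReal.ofReal |LinearMap.det L| * ∫⁻ Y, F (L Y)) := by
        rw [key F]
    _ = (ENNReal.ofReal c * ENNReal.ofReal |LinearMap.det L|)
          * ∫⁻ Y : Fin m → Fin n → ℝ,
            ENNReal.ofReal (g (Matrix.trace ((Matrix.of Y)ᵀ * Matrix.of Y))) := by
        rw [mul_assoc]
        congr 1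
        congr 1
        refine lintegral_congr fun Y => ?_
        show ENNReal.ofReal (g (Matrix.trace ((A * Matrix.of Y * B)ᵀ * S⁻¹ * (A * Matrix.of Y * B) * P⁻¹))) = _
        rw [htrace (Matrix.of Y)]
    _ = ∫⁻ Y : Fin m → Fin n → ℝ,
          ENNReal.ofReal (g (Matrix.trace ((Matrix.of Y)ᵀ * Matrix.of Y))) := by
        rw [← ENNReal.ofReal_mul hc, hconst, ENNReal.ofReal_one, one_mul]
end

section
/- Let m be a positive natural number, let μ ∈ ℝ^m, let Σ be a real symmetric positive definite m×m matrix, and let r > 0, s > 0, Q be reals with 2Q + m > 2. Define v(x) = (x−μ)ᵀ Σ⁻¹ (x−μ). Then the Kotz type function f(x) = [s · r^{(2Q+m−2)/(2s)} · Γ(m/2) · (det Σ)^{-1/2} / (π^{m/2} · Γ((2Q+m−2)/(2s)))] · v(x)^{Q−1} · exp(−r · v(x)^s) is a probability density on ℝ^m, i.e., f is nonnegative almost everywhere and ∫_{ℝ^m} f(x) dx = 1. -/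
open MeasureTheory Matrix Set Real

/-- The Kotz type function with location `μ`, positive definite scale `Σ`, and parameters
`r > 0`, `s > 0`, `2Q + m > 2` is a probability density on `ℝ^m`: it is nonnegative almost
everywhere and integrates to `1` with respect to Lebesgue measure. -/
theorem stmt_5 (m : ℕ) (hm : 0 < m) (μ : Fin m → ℝ)
    (S : Matrix (Fin m) (Fin m) ℝ) (hSsym : S.IsSymm) (hS : S.PosDef)
    (r s Q : ℝ) (hr : 0 < r) (hs : 0 < s) (hQ : 2 < 2 * Q + m) :
    (∀ᵐ x : Fin m → ℝ,
        0 ≤ s * r ^ ((2 * Q + m - 2) / (2 * s)) * Real.Gamma ((m : ℝ) / 2)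
              * S.det ^ (-(1 : ℝ) / 2)
              / (Real.pi ^ ((m : ℝ) / 2) * Real.Gamma ((2 * Q + m - 2) / (2 * s)))
            * ((x - μ) ⬝ᵥ (S⁻¹ *ᵥ (x - μ))) ^ (Q - 1)
            * Real.exp (-r * ((x - μ) ⬝ᵥ (S⁻¹ *ᵥ (x - μ))) ^ s)) ∧
    (∫ x : Fin m → ℝ,
        s * r ^ ((2 * Q + m - 2) / (2 * s)) * Real.Gamma ((m : ℝ) / 2)
              * S.det ^ (-(1 : ℝ) / 2)
              / (Real.pi ^ ((m : ℝ) / 2) * Real.Gamma ((2 * Q + m - 2) / (2 * s)))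
            * ((x - μ) ⬝ᵥ (S⁻¹ *ᵥ (x - μ))) ^ (Q - 1)
            * Real.exp (-r * ((x - μ) ⬝ᵥ (S⁻¹ *ᵥ (x - μ))) ^ s)) = 1 := by
  classical
  have hπ := Real.pi_pos
  have hd : 0 < S.det := hS.det_pos
  have hαpos : 0 < (2 * Q + (m : ℝ) - 2) / (2 * s) := div_pos (by linarith) (by linarith)
  have hΓα : 0 < Real.Gamma ((2 * Q + (m : ℝ) - 2) / (2 * s)) := Real.Gamma_pos_of_pos hαpos
  have hΓm : 0 < Real.Gamma ((m : ℝ) / 2) := Real.Gamma_pos_of_pos (by positivity)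
  set C : ℝ := s * r ^ ((2 * Q + (m : ℝ) - 2) / (2 * s)) * Real.Gamma ((m : ℝ) / 2)
      * S.det ^ (-(1 : ℝ) / 2)
      / (Real.pi ^ ((m : ℝ) / 2) * Real.Gamma ((2 * Q + (m : ℝ) - 2) / (2 * s))) with hCdef
  have hCpos : 0 < C := by
    apply div_pos
    · have h1 : (0:ℝ) < r ^ ((2 * Q + (m : ℝ) - 2) / (2 * s)) := Real.rpow_pos_of_pos hr _
      have h2 : (0:ℝ) < S.det ^ (-(1 : ℝ) / 2) := Real.rpow_pos_of_pos hd _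
      positivity
    · have := Real.rpow_pos_of_pos hπ ((m : ℝ) / 2)
      positivity
  have hvnonneg : ∀ x : Fin m → ℝ, 0 ≤ x ⬝ᵥ (S⁻¹ *ᵥ x) := by
    intro x
    have := hS.posSemidef.inv.dotProduct_mulVec_nonneg x
    simpa using this
  refine ⟨Filter.Eventually.of_forall fun x => ?_, ?_⟩
  · exact mul_nonneg (mul_nonneg hCpos.le (Real.rpow_nonneg (hvnonneg _) _))
      (Real.exp_nonneg _)
  -- the square root of S
  have hB0 : S.PosSemidef := hS.posSemidef
  set B := (open scoped MatrixOrder in CFC.sqrt S) with hBdef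
  have hBps : B.PosSemidef := (open scoped MatrixOrder in (CFC.sqrt_nonneg S).posSemidef)
  have hBB : B * B = S := (open scoped MatrixOrder in CFC.sqrt_mul_sqrt_self S hB0.nonneg)
  have hdetB2 : B.det * B.det = S.det := by rw [← Matrix.det_mul, hBB]
  have hdetBnn : 0 ≤ B.det := by
    rw [hBps.isHermitian.det_eq_prod_eigenvalues]
    exact Finset.prod_nonneg fun i _ => by simpa using hBps.eigenvalues_nonneg i
  have hdetBpos : 0 < B.det := by
    rcases hdetBnn.lt_or_eq with h | h
    · exact h
    · exfalso; rw [← h] at hdetB2; simp at hdetB2; nlinarith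
  have hdetB : B.det = S.det ^ ((1:ℝ)/2) := by
    rw [← Real.sqrt_eq_rpow, ← hdetB2, Real.sqrt_mul_self hdetBnn]
  have hBsymm : Bᵀ = B := by
    have := hBps.isHermitian
    rwa [Matrix.IsHermitian, Matrix.conjTranspose_eq_transpose_of_trivial] at this
  have hBunit : IsUnit B.det := isUnit_iff_ne_zero.2 hdetBpos.ne'
  have hkey : B * (S⁻¹ * B) = 1 := by
    rw [← hBB, Matrix.mul_inv_rev, Matrix.mul_assoc B⁻¹, Matrix.nonsing_inv_mul _ hBunit,
      Matrix.mul_one, Matrix.mul_nonsing_inv _ hBunit]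
  have hquad : ∀ y : Fin m → ℝ, (B *ᵥ y) ⬝ᵥ (S⁻¹ *ᵥ (B *ᵥ y)) = y ⬝ᵥ y := by
    intro y
    calc (B *ᵥ y) ⬝ᵥ (S⁻¹ *ᵥ (B *ᵥ y))
        = (y ᵥ* Bᵀ) ⬝ᵥ ((S⁻¹ * B) *ᵥ y) := by
          rw [Matrix.mulVec_mulVec, Matrix.vecMul_transpose]
      _ = (y ᵥ* (Bᵀ * (S⁻¹ * B))) ⬝ᵥ y := by
          rw [Matrix.dotProduct_mulVec, Matrix.vecMul_vecMul]
      _ = y ⬝ᵥ y := by rw [hBsymm, hkey, Matrix.vecMul_one]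
  -- measurability
  have hvcont : Continuous fun x : Fin m → ℝ => x ⬝ᵥ (S⁻¹ *ᵥ x) := by
    simp only [dotProduct, Matrix.mulVec, dotProduct]
    exact continuous_finset_sum _ fun i _ =>
      (continuous_apply i).mul (continuous_finset_sum _ fun j _ =>
        continuous_const.mul (continuous_apply j))
  have hgmeas : Measurable fun x : Fin m → ℝ =>
      C * (x ⬝ᵥ (S⁻¹ *ᵥ x)) ^ (Q - 1) * Real.exp (-r * (x ⬝ᵥ (S⁻¹ *ᵥ x)) ^ s) := by
    have hv : Measurable fun x : Fin m → ℝ => x ⬝ᵥ (S⁻¹ *ᵥ x) := hvcont.measurable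
    fun_prop
  -- Step 1 : translation
  have step1 : (∫ x : Fin m → ℝ,
      C * ((x - μ) ⬝ᵥ (S⁻¹ *ᵥ (x - μ))) ^ (Q - 1)
        * Real.exp (-r * ((x - μ) ⬝ᵥ (S⁻¹ *ᵥ (x - μ))) ^ s))
      = ∫ x : Fin m → ℝ, C * (x ⬝ᵥ (S⁻¹ *ᵥ x)) ^ (Q - 1)
        * Real.exp (-r * (x ⬝ᵥ (S⁻¹ *ᵥ x)) ^ s) :=
    integral_sub_right_eq_self
      (fun x => C * (x ⬝ᵥ (S⁻¹ *ᵥ x)) ^ (Q - 1) * Real.exp (-r * (x ⬝ᵥ (S⁻¹ *ᵥ x)) ^ s)) μ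
  -- Step 2 : linear change of variables by B
  have hmap : Measure.map (Matrix.toLin' B) volume = ENNReal.ofReal |B.det⁻¹| • volume :=
    Real.map_matrix_volume_pi_eq_smul_volume_pi hdetBpos.ne'
  have step2 : (∫ x : Fin m → ℝ, C * (x ⬝ᵥ (S⁻¹ *ᵥ x)) ^ (Q - 1)
        * Real.exp (-r * (x ⬝ᵥ (S⁻¹ *ᵥ x)) ^ s))
      = B.det * ∫ y : Fin m → ℝ, C * (y ⬝ᵥ y) ^ (Q - 1) * Real.exp (-r * (y ⬝ᵥ y) ^ s) := by
    have hlin : Measurable (Matrix.toLin' B) := (Matrix.toLin' B).continuous_on_pi.measurable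
    have h1 : (∫ y : Fin m → ℝ,
        C * ((Matrix.toLin' B) y ⬝ᵥ (S⁻¹ *ᵥ ((Matrix.toLin' B) y))) ^ (Q - 1)
          * Real.exp (-r * ((Matrix.toLin' B) y ⬝ᵥ (S⁻¹ *ᵥ ((Matrix.toLin' B) y))) ^ s))
        = ∫ x : Fin m → ℝ, C * (x ⬝ᵥ (S⁻¹ *ᵥ x)) ^ (Q - 1)
          * Real.exp (-r * (x ⬝ᵥ (S⁻¹ *ᵥ x)) ^ s) ∂(Measure.map (Matrix.toLin' B) volume) :=
      (integral_map hlin.aemeasurable hgmeas.aestronglyMeasurable).symm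
    have h2 : ∀ y : Fin m → ℝ,
        C * ((Matrix.toLin' B) y ⬝ᵥ (S⁻¹ *ᵥ ((Matrix.toLin' B) y))) ^ (Q - 1)
          * Real.exp (-r * ((Matrix.toLin' B) y ⬝ᵥ (S⁻¹ *ᵥ ((Matrix.toLin' B) y))) ^ s)
        = C * (y ⬝ᵥ y) ^ (Q - 1) * Real.exp (-r * (y ⬝ᵥ y) ^ s) := by
      intro y
      rw [Matrix.toLin'_apply, hquad]
    rw [funext h2] at h1
    rw [hmap, integral_smul_measure] at h1
    rw [h1, abs_of_pos (inv_pos.2 hdetBpos), ENNReal.toReal_ofReal (inv_pos.2 hdetBpos).le,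
      smul_eq_mul, ← mul_assoc, mul_inv_cancel₀ hdetBpos.ne', one_mul]
  -- Step 3 : move to Euclidean space
  haveI : Nonempty (Fin m) := ⟨⟨0, hm⟩⟩
  have hnormsq : ∀ z : EuclideanSpace ℝ (Fin m),
      ((MeasurableEquiv.toLp 2 (Fin m → ℝ)).symm z) ⬝ᵥ ((MeasurableEquiv.toLp 2 (Fin m → ℝ)).symm z)
        = ‖z‖ ^ (2:ℕ) := by
    intro z
    rw [EuclideanSpace.norm_eq, Real.sq_sqrt (by positivity)]
    simp [dotProduct, Real.norm_eq_abs, sq_abs, sq]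
  have step3 : (∫ y : Fin m → ℝ, C * (y ⬝ᵥ y) ^ (Q - 1) * Real.exp (-r * (y ⬝ᵥ y) ^ s))
      = ∫ z : EuclideanSpace ℝ (Fin m),
          C * ((‖z‖ ^ (2:ℕ) : ℝ)) ^ (Q - 1) * Real.exp (-r * (‖z‖ ^ (2:ℕ) : ℝ) ^ s) := by
    rw [← (EuclideanSpace.volume_preserving_symm_measurableEquiv_toLp (Fin m)).integral_comp
      (MeasurableEquiv.toLp 2 (Fin m → ℝ)).symm.measurableEmbedding
      (fun y : Fin m → ℝ => C * (y ⬝ᵥ y) ^ (Q - 1) * Real.exp (-r * (y ⬝ᵥ y) ^ s))]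
    refine integral_congr_ae (Filter.Eventually.of_forall fun z => ?_)
    simp only [hnormsq]
  -- Step 4 : radial integration
  haveI : Nontrivial (EuclideanSpace ℝ (Fin m)) :=
    inferInstanceAs (Nontrivial (PiLp 2 fun _ : Fin m => ℝ))
  have step4 := integral_fun_norm_addHaar (volume : Measure (EuclideanSpace ℝ (Fin m)))
    (fun t : ℝ => C * ((t ^ (2:ℕ) : ℝ)) ^ (Q - 1) * Real.exp (-r * (t ^ (2:ℕ) : ℝ) ^ s))
  rw [finrank_euclideanSpace_fin] at step4
  -- volume of the unit ball
  have hball : ((volume (Metric.ball (0 : EuclideanSpace ℝ (Fin m)) 1)).toReal : ℝ)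
      = Real.pi ^ ((m : ℝ) / 2) / Real.Gamma ((m : ℝ) / 2 + 1) := by
    rw [EuclideanSpace.volume_ball]
    simp only [Fintype.card_fin, ENNReal.ofReal_one, one_pow, one_mul]
    rw [ENNReal.toReal_ofReal (by positivity)]
    congr 1
    rw [Real.sqrt_eq_rpow, ← Real.rpow_natCast (Real.pi ^ ((1:ℝ)/2)) m,
      ← Real.rpow_mul hπ.le, show (1:ℝ)/2 * (m:ℝ) = (m:ℝ)/2 from by ring]
  -- the one-dimensional integral
  have step5 : (∫ t in Ioi (0:ℝ), t ^ (m - 1) •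
        (C * ((t ^ (2:ℕ) : ℝ)) ^ (Q - 1) * Real.exp (-r * (t ^ (2:ℕ) : ℝ) ^ s)))
      = C * (r ^ (-(2 * Q + (m : ℝ) - 2) / (2 * s)) * (1 / (2 * s))
          * Real.Gamma ((2 * Q + (m : ℝ) - 2) / (2 * s))) := by
    have hpt : ∀ t ∈ Ioi (0:ℝ), t ^ (m - 1) •
        (C * ((t ^ (2:ℕ) : ℝ)) ^ (Q - 1) * Real.exp (-r * (t ^ (2:ℕ) : ℝ) ^ s))
        = C * (t ^ (2 * Q + (m : ℝ) - 3) * Real.exp (-r * t ^ (2 * s))) := by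
      intro t ht
      have ht : (0:ℝ) < t := ht
      have h2 : (t ^ (2:ℕ) : ℝ) = t ^ ((2:ℕ) : ℝ) := (Real.rpow_natCast t 2).symm
      have hsq : ((t ^ (2:ℕ) : ℝ)) ^ (Q - 1) = t ^ (2 * (Q - 1)) := by
        rw [h2, ← Real.rpow_mul ht.le]
        norm_num
      have hss : ((t ^ (2:ℕ) : ℝ)) ^ s = t ^ (2 * s) := by
        rw [h2, ← Real.rpow_mul ht.le]
        norm_num
      have hnp : (t : ℝ) ^ (m - 1) = t ^ (((m:ℝ) - 1)) := by
        rw [← Real.rpow_natCast t (m - 1), Nat.cast_sub hm]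
        norm_num
      rw [smul_eq_mul, hsq, hss, hnp,
        show t ^ ((m:ℝ) - 1) * (C * t ^ (2 * (Q - 1)) * Real.exp (-r * t ^ (2 * s)))
          = C * (t ^ ((m:ℝ) - 1) * t ^ (2 * (Q - 1)) * Real.exp (-r * t ^ (2 * s))) from by ring,
        ← Real.rpow_add ht,
        show ((m:ℝ) - 1) + 2 * (Q - 1) = 2 * Q + (m : ℝ) - 3 from by ring]
    rw [setIntegral_congr_fun measurableSet_Ioi hpt, integral_const_mul,
      integral_rpow_mul_exp_neg_mul_rpow (by linarith) (by push_cast; linarith) hr]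
    congr 2 <;> ring
  -- assemble everything
  rw [step1, step2, step3, step4, step5, measureReal_def, hball]
  -- final computation
  have hΓ1 : Real.Gamma ((m : ℝ) / 2 + 1) = ((m : ℝ) / 2) * Real.Gamma ((m : ℝ) / 2) :=
    Real.Gamma_add_one (by positivity)
  have hrneg : r ^ (-(2 * Q + (m : ℝ) - 2) / (2 * s))
      = (r ^ ((2 * Q + (m : ℝ) - 2) / (2 * s)))⁻¹ := by
    rw [neg_div, Real.rpow_neg hr.le]
  have hdneg : S.det ^ (-(1:ℝ) / 2) = (S.det ^ ((1:ℝ)/2))⁻¹ := by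
    rw [neg_div, Real.rpow_neg hd.le]
  have hπpow : (0:ℝ) < Real.pi ^ ((m : ℝ) / 2) := Real.rpow_pos_of_pos hπ _
  have hrpow : (0:ℝ) < r ^ ((2 * Q + (m : ℝ) - 2) / (2 * s)) := Real.rpow_pos_of_pos hr _
  have hdpow : (0:ℝ) < S.det ^ ((1:ℝ)/2) := Real.rpow_pos_of_pos hd _
  have hm' : (0:ℝ) < (m:ℝ) := by exact_mod_cast hm
  rw [hCdef, hΓ1, hdetB, hrneg, hdneg, nsmul_eq_mul, smul_eq_mul]
  field_simp
end

section
/- Let m be a positive natural number, let μ ∈ ℝ^m, let Σ be a real symmetric positive definite m×m matrix, and let r > 0 and Q > m/2 be reals. Define v(x) = (x−μ)ᵀ Σ⁻¹ (x−μ). Then the Pearson type VII function f(x) = [Γ(Q) (det Σ)^{-1/2} / ((rπ)^{m/2} Γ((2Q−m)/2))] · (1 + v(x)/r)^{-Q} is a probability density on ℝ^m, i.e., f is nonnegative and ∫_{ℝ^m} f(x) dx = 1. -/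
open MeasureTheory Matrix Set Real


lemma aux_integrableOn {a s : ℝ} (ha : 0 < a) (hs : 0 < s) :
    IntegrableOn (fun t : ℝ => t ^ (a - 1) * rexp (-(s * t))) (Ioi 0) := by
  have h0 := Real.GammaIntegral_convergent ha
  have h1 : IntegrableOn (fun x : ℝ => rexp (-(s * x)) * (s * x) ^ (a - 1)) (Ioi 0) := by
    have h2 := (integrableOn_Ioi_comp_mul_left_iff
      (fun x : ℝ => rexp (-x) * x ^ (a - 1)) 0 hs).2 (by simpa using h0)
    simpa using h2
  refine IntegrableOn.congr_fun (MeasureTheory.Integrable.const_mul h1 (s ^ (1 - a)))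
    (fun t ht => ?_) measurableSet_Ioi
  have ht0 : (0:ℝ) < t := ht
  rw [Real.mul_rpow hs.le ht0.le, ← mul_assoc, mul_comm (s ^ (1-a)) (rexp (-(s*t))),
    mul_assoc, ← mul_assoc (s ^ (1-a)), ← Real.rpow_add hs]
  norm_num
  ring

lemma aux_lintegral_gamma {a s : ℝ} (ha : 0 < a) (hs : 0 < s) :
    ∫⁻ t in Ioi (0:ℝ), ENNReal.ofReal (t ^ (a - 1) * rexp (-(s * t)))
      = ENNReal.ofReal (s ^ (-a) * Real.Gamma a) := by
  rw [← ofReal_integral_eq_lintegral_ofReal (aux_integrableOn ha hs)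
      ((ae_restrict_iff' measurableSet_Ioi).2 (ae_of_all _ fun t ht =>
        mul_nonneg (Real.rpow_nonneg (le_of_lt ht) _) (exp_pos _).le))]
  rw [integral_rpow_mul_exp_neg_mul_Ioi ha hs]
  congr 1
  rw [one_div, Real.inv_rpow hs.le, ← Real.rpow_neg hs.le]

lemma aux_gauss_integrable (m : ℕ) {t : ℝ} (ht : 0 < t) :
    Integrable (fun y : EuclideanSpace ℝ (Fin m) => rexp (-(t * ‖y‖ ^ 2))) := by
  have hc := GaussianFourier.integrable_cexp_neg_mul_sq_norm_add (V := EuclideanSpace ℝ (Fin m))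
    (b := (t : ℂ)) (by simpa using ht) 0 0
  refine hc.re.congr (ae_of_all _ fun y => ?_)
  have h : (-(t:ℂ) * ‖y‖ ^ 2 + 0 * ((inner ℝ (0 : EuclideanSpace ℝ (Fin m)) y : ℝ) : ℂ))
      = ((-(t * ‖y‖ ^ 2) : ℝ) : ℂ) := by push_cast; ring
  simp only [RCLike.re_to_complex]
  rw [h, Complex.exp_ofReal_re]

lemma aux_gauss_lintegral (m : ℕ) {t : ℝ} (ht : 0 < t) :
    ∫⁻ y : EuclideanSpace ℝ (Fin m), ENNReal.ofReal (rexp (-(t * ‖y‖ ^ 2)))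
      = ENNReal.ofReal ((π / t) ^ ((m:ℝ) / 2)) := by
  rw [← ofReal_integral_eq_lintegral_ofReal (aux_gauss_integrable m ht)
      (ae_of_all _ fun y => (exp_pos _).le)]
  congr 1
  have h := GaussianFourier.integral_rexp_neg_mul_sq_norm (V := EuclideanSpace ℝ (Fin m)) ht
  simp only [finrank_euclideanSpace_fin, neg_mul] at h ⊢
  exact h
lemma aux_alg {g p c a b : ℝ} (hg : g ≠ 0) (hp : p ≠ 0) (hc : c ≠ 0) (ha : a ≠ 0) (hb : b ≠ 0) :
    g * c⁻¹ / (a * b * p) * (a * c * (b * p / g)) = 1 := by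
  field_simp

section
variable {m : ℕ}

lemma aux_J (m : ℕ) {Q : ℝ} (hQm : (m:ℝ)/2 < Q) :
    ∫ y : EuclideanSpace ℝ (Fin m), (1 + ‖y‖ ^ 2) ^ (-Q)
      = π ^ ((m:ℝ)/2) * Real.Gamma (Q - m/2) / Real.Gamma Q := by
  have hQ0 : 0 < Q := lt_of_le_of_lt (by positivity) hQm
  have hp : 0 < Q - m/2 := sub_pos.2 hQm
  have hΓQ : 0 < Real.Gamma Q := Real.Gamma_pos_of_pos hQ0
  have hΓp : 0 < Real.Gamma (Q - m/2) := Real.Gamma_pos_of_pos hp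
  set E := EuclideanSpace ℝ (Fin m)
  have hmeas : Measurable fun y : E => (1 + ‖y‖ ^ 2) ^ (-Q) := by fun_prop
  have key : (∫⁻ y : E, ENNReal.ofReal ((1 + ‖y‖ ^ 2) ^ (-Q))) * ENNReal.ofReal (Real.Gamma Q)
      = ENNReal.ofReal (π ^ ((m:ℝ)/2) * Real.Gamma (Q - m/2)) := by
    have hswap : ∫⁻ y : E, ∫⁻ t in Ioi (0:ℝ),
          ENNReal.ofReal (t ^ (Q-1) * rexp (-((1 + ‖y‖ ^ 2) * t)))
        = ∫⁻ t in Ioi (0:ℝ), ∫⁻ y : E,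
          ENNReal.ofReal (t ^ (Q-1) * rexp (-((1 + ‖y‖ ^ 2) * t))) := by
      refine lintegral_lintegral_swap (Measurable.aemeasurable ?_)
      fun_prop
    calc (∫⁻ y : E, ENNReal.ofReal ((1 + ‖y‖ ^ 2) ^ (-Q))) * ENNReal.ofReal (Real.Gamma Q)
        = ∫⁻ y : E, ENNReal.ofReal ((1 + ‖y‖ ^ 2) ^ (-Q)) * ENNReal.ofReal (Real.Gamma Q) :=
          (lintegral_mul_const' _ _ ENNReal.ofReal_ne_top).symm
      _ = ∫⁻ y : E, ∫⁻ t in Ioi (0:ℝ),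
            ENNReal.ofReal (t ^ (Q-1) * rexp (-((1 + ‖y‖ ^ 2) * t))) := by
          refine lintegral_congr fun y => ?_
          have hs : (0:ℝ) < 1 + ‖y‖ ^ 2 := by positivity
          rw [aux_lintegral_gamma hQ0 hs,
            ENNReal.ofReal_mul (Real.rpow_nonneg hs.le _)]
      _ = ∫⁻ t in Ioi (0:ℝ), ∫⁻ y : E,
            ENNReal.ofReal (t ^ (Q-1) * rexp (-((1 + ‖y‖ ^ 2) * t))) := hswap
      _ = ∫⁻ t in Ioi (0:ℝ), ENNReal.ofReal (π ^ ((m:ℝ)/2))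
            * ENNReal.ofReal (t ^ ((Q - m/2) - 1) * rexp (-(1 * t))) := by
          refine setLIntegral_congr_fun measurableSet_Ioi (fun t ht => ?_)
          have ht0 : (0:ℝ) < t := ht
          have h1 : ∀ y : E, t ^ (Q-1) * rexp (-((1 + ‖y‖ ^ 2) * t))
              = (t ^ (Q-1) * rexp (-t)) * rexp (-(t * ‖y‖ ^ 2)) := by
            intro y
            rw [mul_assoc, ← Real.exp_add]
            ring_nf
          simp_rw [h1]
          rw [show (fun y : E => ENNReal.ofReal ((t ^ (Q-1) * rexp (-t)) * rexp (-(t * ‖y‖ ^ 2))))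
              = fun y : E => ENNReal.ofReal (t ^ (Q-1) * rexp (-t))
                  * ENNReal.ofReal (rexp (-(t * ‖y‖ ^ 2))) from funext fun y =>
              ENNReal.ofReal_mul (by positivity)]
          rw [lintegral_const_mul' _ _ ENNReal.ofReal_ne_top, aux_gauss_lintegral m ht0,
            ← ENNReal.ofReal_mul (by positivity), ← ENNReal.ofReal_mul (by positivity)]
          congr 1
          rw [Real.div_rpow Real.pi_pos.le ht0.le, one_mul]
          have h2 : t ^ (Q - (m:ℝ)/2 - 1) = t ^ (Q-1) / t ^ ((m:ℝ)/2) := by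
            rw [← Real.rpow_sub ht0]; ring_nf
          rw [h2]
          have h3 : t ^ ((m:ℝ)/2) ≠ 0 := (Real.rpow_pos_of_pos ht0 _).ne'
          field_simp
      _ = ENNReal.ofReal (π ^ ((m:ℝ)/2)) * ENNReal.ofReal (Real.Gamma (Q - m/2)) := by
          rw [lintegral_const_mul' _ _ ENNReal.ofReal_ne_top, aux_lintegral_gamma hp one_pos]
          simp
      _ = ENNReal.ofReal (π ^ ((m:ℝ)/2) * Real.Gamma (Q - m/2)) :=
          (ENNReal.ofReal_mul (by positivity)).symm
  have hlint : ∫⁻ y : E, ENNReal.ofReal ((1 + ‖y‖ ^ 2) ^ (-Q))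
      = ENNReal.ofReal (π ^ ((m:ℝ)/2) * Real.Gamma (Q - m/2) / Real.Gamma Q) := by
    have h2 : ENNReal.ofReal (π ^ ((m:ℝ)/2) * Real.Gamma (Q - m/2) / Real.Gamma Q)
        * ENNReal.ofReal (Real.Gamma Q)
        = ENNReal.ofReal (π ^ ((m:ℝ)/2) * Real.Gamma (Q - m/2)) := by
      rw [← ENNReal.ofReal_mul (by positivity), div_mul_cancel₀ _ hΓQ.ne']
    have h3 := key.trans h2.symm
    rw [mul_comm _ (ENNReal.ofReal (Real.Gamma Q)),
      mul_comm _ (ENNReal.ofReal (Real.Gamma Q))] at h3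
    exact (ENNReal.mul_right_inj (by simpa using hΓQ) ENNReal.ofReal_ne_top).1 h3
  rw [integral_eq_lintegral_of_nonneg_ae
      (ae_of_all _ fun y => Real.rpow_nonneg (by positivity) _) hmeas.aestronglyMeasurable,
    hlint, ENNReal.toReal_ofReal (by positivity)]
end

/-- The Pearson type VII function with location `μ`, positive definite scale `Σ`, and
parameters `r > 0`, `Q > m/2` is a probability density on `ℝ^m`: it is nonnegative and
integrates to `1` with respect to Lebesgue measure. -/
theorem stmt_8 (m : ℕ) (hm : 0 < m) (μ : Fin m → ℝ)
    (S : Matrix (Fin m) (Fin m) ℝ) (hSsym : S.IsSymm) (hS : S.PosDef)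
    (r Q : ℝ) (hr : 0 < r) (hQ : (m : ℝ) / 2 < Q) :
    (∀ x : Fin m → ℝ,
        0 ≤ Real.Gamma Q * S.det ^ (-(1 : ℝ) / 2)
              / ((r * Real.pi) ^ ((m : ℝ) / 2) * Real.Gamma ((2 * Q - m) / 2))
            * (1 + ((x - μ) ⬝ᵥ (S⁻¹ *ᵥ (x - μ))) / r) ^ (-Q)) ∧
    (∫ x : Fin m → ℝ,
        Real.Gamma Q * S.det ^ (-(1 : ℝ) / 2)
              / ((r * Real.pi) ^ ((m : ℝ) / 2) * Real.Gamma ((2 * Q - m) / 2))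
            * (1 + ((x - μ) ⬝ᵥ (S⁻¹ *ᵥ (x - μ))) / r) ^ (-Q)) = 1 := by
  have hQ0 : 0 < Q := lt_of_le_of_lt (by positivity) hQ
  have hp : 0 < Q - m/2 := sub_pos.2 hQ
  have hΓQ : 0 < Real.Gamma Q := Real.Gamma_pos_of_pos hQ0
  have hΓp : 0 < Real.Gamma (Q - m/2) := Real.Gamma_pos_of_pos hp
  have hdS : 0 < S.det := hS.det_pos
  have hvnn : ∀ z : Fin m → ℝ, 0 ≤ z ⬝ᵥ (S⁻¹ *ᵥ z) := fun z => by
    have := (hS.inv).posSemidef.re_dotProduct_nonneg z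
    simpa using this
  have hΓeq : Real.Gamma ((2*Q - (m:ℝ))/2) = Real.Gamma (Q - (m:ℝ)/2) := by
    congr 1; ring
  constructor
  · intro x
    apply mul_nonneg
    · apply div_nonneg (mul_nonneg hΓQ.le (Real.rpow_nonneg hdS.le _))
      apply mul_nonneg (Real.rpow_nonneg (by positivity) _)
      rw [hΓeq]; exact hΓp.le
    · exact Real.rpow_nonneg (add_nonneg zero_le_one (div_nonneg (hvnn _) hr.le)) _
  · open scoped MatrixOrder in
    set A := CFC.sqrt S with hAdef
    have hAA : A * A = S := open scoped MatrixOrder in CFC.sqrt_mul_sqrt_self S hS.posSemidef.nonneg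
    have hAT : Aᵀ = A := by
      have h := open scoped MatrixOrder in (CFC.sqrt_nonneg S).posSemidef.1
      rwa [Matrix.IsHermitian, Matrix.conjTranspose_eq_transpose_of_trivial] at h
    have hdetA2 : A.det * A.det = S.det := by rw [← Matrix.det_mul, hAA]
    have hdetAne : A.det ≠ 0 := by
      intro h
      rw [h, mul_zero] at hdetA2
      exact hdS.ne' hdetA2.symm
    have hASA : A * S⁻¹ * A = 1 := by
      have h1 : A * A⁻¹ = 1 := Matrix.mul_nonsing_inv A (isUnit_iff_ne_zero.2 hdetAne)
      have h2 : A⁻¹ * A = 1 := Matrix.nonsing_inv_mul A (isUnit_iff_ne_zero.2 hdetAne)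
      calc A * S⁻¹ * A = A * (A*A)⁻¹ * A := by rw [hAA]
        _ = A * (A⁻¹ * A⁻¹) * A := by rw [Matrix.mul_inv_rev]
        _ = (A * A⁻¹) * ((A⁻¹) * A) := by rw [← Matrix.mul_assoc, Matrix.mul_assoc (A * A⁻¹)]
        _ = 1 := by rw [h1, h2, one_mul]
    have hquad : ∀ y : Fin m → ℝ, (A *ᵥ y) ⬝ᵥ (S⁻¹ *ᵥ (A *ᵥ y)) = y ⬝ᵥ y := fun y => by
      rw [Matrix.mulVec_mulVec, Matrix.dotProduct_mulVec, Matrix.vecMul_mulVec, hAT,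
        ← Matrix.mul_assoc, hASA, Matrix.vecMul_one]
    set M : Matrix (Fin m) (Fin m) ℝ := Real.sqrt r • A with hMdef
    have hdetM : M.det = (Real.sqrt r) ^ m * A.det := by
      rw [hMdef, Matrix.det_smul]; simp
    have hdetMne : M.det ≠ 0 := by
      rw [hdetM]; exact mul_ne_zero (pow_ne_zero _ (Real.sqrt_pos.2 hr).ne') hdetAne
    have habs : |M.det| = r ^ ((m:ℝ)/2) * S.det ^ ((1:ℝ)/2) := by
      have e1 : (r ^ ((m:ℝ)/2)) ^ (2:ℕ) = r ^ (m:ℕ) := by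
        rw [← Real.rpow_natCast (r ^ ((m:ℝ)/2)) 2, ← Real.rpow_mul hr.le,
          show ((m:ℝ)/2 * ((2:ℕ):ℝ) : ℝ) = ((m:ℕ):ℝ) by push_cast; ring, Real.rpow_natCast]
      have e2 : (S.det ^ ((1:ℝ)/2)) ^ (2:ℕ) = S.det := by
        rw [← Real.rpow_natCast (S.det ^ ((1:ℝ)/2)) 2, ← Real.rpow_mul hdS.le,
          show ((1:ℝ)/2 * ((2:ℕ):ℝ) : ℝ) = 1 by push_cast; ring, Real.rpow_one]
      have e3 : ((Real.sqrt r) ^ m) ^ (2:ℕ) = r ^ m := by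
        rw [← pow_mul, mul_comm m 2, pow_mul, Real.sq_sqrt hr.le]
      have hsq : |M.det| ^ (2:ℕ) = (r ^ ((m:ℝ)/2) * S.det ^ ((1:ℝ)/2)) ^ (2:ℕ) := by
        rw [sq_abs, hdetM, mul_pow, mul_pow, e1, e2, e3, pow_two, hdetA2]
      calc |M.det| = Real.sqrt (|M.det| ^ 2) := (Real.sqrt_sq (abs_nonneg _)).symm
        _ = Real.sqrt ((r ^ ((m:ℝ)/2) * S.det ^ ((1:ℝ)/2)) ^ 2) := by rw [hsq]
        _ = r ^ ((m:ℝ)/2) * S.det ^ ((1:ℝ)/2) := Real.sqrt_sq (by positivity)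
    have hcont_v : Continuous fun z : Fin m → ℝ => z ⬝ᵥ (S⁻¹ *ᵥ z) := by
      have h : (fun z : Fin m → ℝ => z ⬝ᵥ (S⁻¹ *ᵥ z))
          = fun z => ∑ i, z i * ∑ j, S⁻¹ i j * z j := rfl
      rw [h]
      exact continuous_finset_sum _ fun i _ => (continuous_apply i).mul
        (continuous_finset_sum _ fun j _ => continuous_const.mul (continuous_apply j))
    have hmeas_h : Measurable fun z : Fin m → ℝ => (1 + z ⬝ᵥ (S⁻¹ *ᵥ z) / r) ^ (-Q) := by
      have h1 : Measurable fun u : ℝ => u ^ (-Q) := by measurability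
      exact h1.comp ((continuous_const.add (hcont_v.div_const r)).measurable)
    rw [MeasureTheory.integral_const_mul]
    have hT : (∫ x : Fin m → ℝ, (1 + ((x - μ) ⬝ᵥ (S⁻¹ *ᵥ (x - μ))) / r) ^ (-Q))
        = ∫ z : Fin m → ℝ, (1 + z ⬝ᵥ (S⁻¹ *ᵥ z) / r) ^ (-Q) :=
      MeasureTheory.integral_sub_right_eq_self
        (fun z => (1 + z ⬝ᵥ (S⁻¹ *ᵥ z) / r) ^ (-Q)) μ
    have hmap := Real.map_matrix_volume_pi_eq_smul_volume_pi (M := M) hdetMne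
    have hLc : Continuous (Matrix.toLin' M) := LinearMap.continuous_on_pi _
    have h1 : (∫ y : Fin m → ℝ, (1 + (M *ᵥ y) ⬝ᵥ (S⁻¹ *ᵥ (M *ᵥ y)) / r) ^ (-Q))
        = ∫ z, (1 + z ⬝ᵥ (S⁻¹ *ᵥ z) / r) ^ (-Q)
            ∂(Measure.map (Matrix.toLin' M) volume) := by
      rw [MeasureTheory.integral_map hLc.aemeasurable hmeas_h.aestronglyMeasurable]
      simp_rw [Matrix.toLin'_apply]
    have hlin : (∫ z : Fin m → ℝ, (1 + z ⬝ᵥ (S⁻¹ *ᵥ z) / r) ^ (-Q))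
        = |M.det| * ∫ y : Fin m → ℝ, (1 + (M *ᵥ y) ⬝ᵥ (S⁻¹ *ᵥ (M *ᵥ y)) / r) ^ (-Q) := by
      rw [hmap, MeasureTheory.integral_smul_measure] at h1
      rw [h1, ENNReal.toReal_ofReal (by positivity), smul_eq_mul, ← mul_assoc, abs_inv,
        mul_inv_cancel₀ (abs_ne_zero.2 hdetMne), one_mul]
    have hMy : ∀ y : Fin m → ℝ, (M *ᵥ y) ⬝ᵥ (S⁻¹ *ᵥ (M *ᵥ y)) = r * (y ⬝ᵥ y) := fun y => by
      rw [hMdef, Matrix.smul_mulVec, Matrix.mulVec_smul, smul_dotProduct,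
        dotProduct_smul, hquad y, smul_eq_mul, smul_eq_mul, ← mul_assoc,
        Real.mul_self_sqrt hr.le]
    have hEuc : (∫ y : Fin m → ℝ, (1 + y ⬝ᵥ y) ^ (-Q))
        = ∫ w : EuclideanSpace ℝ (Fin m), (1 + ‖w‖ ^ 2) ^ (-Q) := by
      rw [← (EuclideanSpace.volume_preserving_symm_measurableEquiv_toLp (Fin m)).integral_comp
        (MeasurableEquiv.measurableEmbedding _) (fun y => (1 + y ⬝ᵥ y) ^ (-Q))]
      refine MeasureTheory.integral_congr_ae (Filter.Eventually.of_forall fun w => ?_)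
      have hn : ‖w‖ ^ 2 = ∑ i, w i ^ 2 := by
        rw [EuclideanSpace.norm_eq, Real.sq_sqrt (by positivity)]
        simp [sq_abs]
      have hd : ((MeasurableEquiv.toLp 2 (Fin m → ℝ)).symm w) ⬝ᵥ
          ((MeasurableEquiv.toLp 2 (Fin m → ℝ)).symm w) = ∑ i, w i ^ 2 := by
        simp [dotProduct, pow_two]
      simp only [hd, hn]
    have hMy2 : (∫ y : Fin m → ℝ, (1 + (M *ᵥ y) ⬝ᵥ (S⁻¹ *ᵥ (M *ᵥ y)) / r) ^ (-Q))
        = ∫ y : Fin m → ℝ, (1 + y ⬝ᵥ y) ^ (-Q) := by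
      refine MeasureTheory.integral_congr_ae (Filter.Eventually.of_forall fun y => ?_)
      simp only [hMy, mul_div_cancel_left₀ _ hr.ne']
    rw [hT, hlin, hMy2, hEuc, aux_J m hQ, habs, hΓeq]
    have h5 : S.det ^ (-(1:ℝ)/2) = (S.det ^ ((1:ℝ)/2))⁻¹ := by
      rw [neg_div, Real.rpow_neg hdS.le]
    have h6 : (r*π) ^ ((m:ℝ)/2) = r ^ ((m:ℝ)/2) * π ^ ((m:ℝ)/2) :=
      Real.mul_rpow hr.le Real.pi_pos.le
    rw [h5, h6]
    have p1 : (0:ℝ) < r ^ ((m:ℝ)/2) := Real.rpow_pos_of_pos hr _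
    have p2 : (0:ℝ) < π ^ ((m:ℝ)/2) := Real.rpow_pos_of_pos Real.pi_pos _
    have p3 : (0:ℝ) < S.det ^ ((1:ℝ)/2) := Real.rpow_pos_of_pos hdS _
    exact aux_alg hΓQ.ne' hΓp.ne' p3.ne' p1.ne' p2.ne'
end
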